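/- arXiv:1201.6527 — 3 statements merged into one kernel-verified Lean document; each statement's English description precedes it below -/
import Mathlib

section
/- For any two l-by-l real positive semidefinite symmetric matrices P and Q, tr(PQ) ≥ Σ_{k=1}^l λ_k(P) λ_{l−k+1}(Q), where λ₁ ≥ … ≥ λ_l denote eigenvalues in decreasing order. -/
open scoped BigOperators

noncomputable def eigsDesc {n : ℕ} {A : Matrix (Fin n) (Fin n) ℝ} (hA : A.IsHermitian) :
    Fin n → ℝ := fun i => (hA.eigenvalues ∘ Tuple.sort hA.eigenvalues) i.rev

noncomputable def singVals {m n : ℕ} (M : Matrix (Fin m) (Fin n) ℝ) : Fin m → ℝ :=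
  fun i => Real.sqrt (eigsDesc (Matrix.isHermitian_mul_conjTranspose_self M) i)

section StmtSixAux

open Matrix Finset

lemma eigsDesc_antitone_aux {n : ℕ} {A : Matrix (Fin n) (Fin n) ℝ} (hA : A.IsHermitian) :
    Antitone (eigsDesc hA) := fun _ _ hij =>
  Tuple.monotone_sort hA.eigenvalues (Fin.rev_le_rev.mpr hij)

lemma ds_rearrangement_aux {n : ℕ} (a b : Fin n → ℝ) (ha : Antitone a) (hb : Antitone b)
    (C : Matrix (Fin n) (Fin n) ℝ) (hC : C ∈ doublyStochastic ℝ (Fin n)) :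
    ∑ k, a k * b k.rev ≤ ∑ k, ∑ m, a k * b m * C k m := by
  obtain ⟨w, hw0, hw1, hwC⟩ := exists_eq_sum_perm_of_mem_doublyStochastic hC
  have key : ∀ σ : Equiv.Perm (Fin n), ∑ k, a k * b k.rev ≤ ∑ k, a k * b (σ k) := by
    intro σ
    have hav : Antivary a (fun k : Fin n => b k.rev) := by
      intro i j h
      rcases le_or_gt j i with hji | hij
      · exact absurd (hb (Fin.rev_le_rev.mpr hji)) (not_le.mpr h)
      · exact ha hij.le
    have := hav.sum_mul_le_sum_mul_comp_perm (σ := σ.trans (Fin.revPerm))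
    simpa [Fin.rev_rev] using this
  calc ∑ k, a k * b k.rev = ∑ σ : Equiv.Perm (Fin n), w σ * ∑ k, a k * b k.rev := by
        rw [← Finset.sum_mul, hw1, one_mul]
    _ ≤ ∑ σ : Equiv.Perm (Fin n), w σ * ∑ k, a k * b (σ k) :=
        Finset.sum_le_sum fun σ _ => mul_le_mul_of_nonneg_left (key σ) (hw0 σ)
    _ = ∑ k, ∑ m, a k * b m * C k m := by
        have h1 : ∀ σ : Equiv.Perm (Fin n), ∀ k, ∑ m, a k * b m * (w σ * (σ.permMatrix ℝ) k m)
            = w σ * (a k * b (σ k)) := by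
          intro σ k
          rw [Finset.sum_eq_single (σ k)]
          · simp [Equiv.Perm.permMatrix, PEquiv.toMatrix_apply, Equiv.toPEquiv_apply]
            ring
          · intro m _ hm
            simp [Equiv.Perm.permMatrix, PEquiv.toMatrix_apply, Equiv.toPEquiv_apply,
              Option.mem_def, (Ne.symm hm)]
          · simp
        rw [← hwC]
        simp only [Matrix.sum_apply, Matrix.smul_apply, smul_eq_mul]
        calc ∑ σ : Equiv.Perm (Fin n), w σ * ∑ k, a k * b (σ k)
            = ∑ σ : Equiv.Perm (Fin n), ∑ k, ∑ m, a k * b m * (w σ * (σ.permMatrix ℝ) k m) := by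
              refine Finset.sum_congr rfl fun σ _ => ?_
              rw [Finset.mul_sum]
              exact Finset.sum_congr rfl fun k _ => (h1 σ k).symm
          _ = ∑ k, ∑ m, ∑ σ : Equiv.Perm (Fin n), a k * b m * (w σ * (σ.permMatrix ℝ) k m) := by
              rw [Finset.sum_comm]
              exact Finset.sum_congr rfl fun k _ => Finset.sum_comm
          _ = _ := by
              refine Finset.sum_congr rfl fun k _ => Finset.sum_congr rfl fun m _ => ?_
              rw [← Finset.mul_sum]

lemma trace_mul_eq_sum_aux {n : ℕ} {P Q : Matrix (Fin n) (Fin n) ℝ} (hP : P.IsHermitian)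
    (hQ : Q.IsHermitian) :
    (P * Q).trace = ∑ i, ∑ j, hP.eigenvalues i * hQ.eigenvalues j *
      ((star (hP.eigenvectorUnitary : Matrix (Fin n) (Fin n) ℝ) *
        (hQ.eigenvectorUnitary : Matrix (Fin n) (Fin n) ℝ)) i j) ^ 2 := by
  set U : Matrix (Fin n) (Fin n) ℝ := (hP.eigenvectorUnitary : Matrix (Fin n) (Fin n) ℝ) with hU
  set V : Matrix (Fin n) (Fin n) ℝ := (hQ.eigenvectorUnitary : Matrix (Fin n) (Fin n) ℝ) with hV
  set W : Matrix (Fin n) (Fin n) ℝ := star U * V with hW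
  set d := hP.eigenvalues
  set e := hQ.eigenvalues
  have hPQ : (P * Q).trace = (diagonal d * W * diagonal e * star W).trace := by
    conv_lhs => rw [hP.spectral_theorem, hQ.spectral_theorem]
    change (U * diagonal (RCLike.ofReal ∘ d) * star U * (V * diagonal (RCLike.ofReal ∘ e) * star V)).trace = _
    have h1 : (U * diagonal (RCLike.ofReal ∘ d) * star U) *
        (V * diagonal (RCLike.ofReal ∘ e) * star V)
        = U * (diagonal d * (star U * (V * (diagonal e * star V)))) := by
      simp only [Matrix.mul_assoc]; rfl
    rw [h1, Matrix.trace_mul_comm]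
    congr 1
    rw [hW, Matrix.star_mul, star_star]
    simp only [Matrix.mul_assoc]
  rw [hPQ, Matrix.trace]
  refine Finset.sum_congr rfl fun i _ => ?_
  simp only [Matrix.diag_apply, Matrix.mul_apply, Matrix.diagonal_apply, Matrix.star_apply,
    star_trivial, ite_mul, zero_mul, Finset.sum_ite_eq, Finset.mem_univ, if_true, Finset.sum_mul,
    Finset.mul_sum]
  refine Finset.sum_congr rfl fun j _ => ?_
  rw [Finset.sum_eq_single j]
  · simp only [if_true, if_pos]; ring
  · intro x _ hx; simp [hx]
  · simp

lemma sq_entries_ds_aux {n : ℕ} {W : Matrix (Fin n) (Fin n) ℝ}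
    (hW : W ∈ Matrix.unitaryGroup (Fin n) ℝ) (f g : Equiv.Perm (Fin n)) :
    Matrix.of (fun k m => W (f k) (g m) ^ 2) ∈ doublyStochastic ℝ (Fin n) := by
  rw [mem_doublyStochastic_iff_sum]
  have hrow : ∀ i, ∑ j, W i j ^ 2 = 1 := by
    intro i
    have h1 : W * star W = 1 := Matrix.mem_unitaryGroup_iff.mp hW
    have := congrFun (congrFun h1 i) i
    simp only [Matrix.mul_apply, Matrix.star_apply, star_trivial, Matrix.one_apply_eq] at this
    simpa [sq] using this
  have hcol : ∀ j, ∑ i, W i j ^ 2 = 1 := by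
    intro j
    have h1 : star W * W = 1 := Matrix.mem_unitaryGroup_iff'.mp hW
    have := congrFun (congrFun h1 j) j
    simp only [Matrix.mul_apply, Matrix.star_apply, star_trivial, Matrix.one_apply_eq] at this
    simpa [sq] using this
  refine ⟨fun i j => sq_nonneg _, fun i => ?_, fun j => ?_⟩
  · simpa using (Equiv.sum_comp g (fun m => W (f i) m ^ 2)).trans (hrow (f i))
  · simpa using (Equiv.sum_comp f (fun k => W k (g j) ^ 2)).trans (hcol (g j))

end StmtSixAux

/-- Reverse-ordered trace inequality for products of PSD matrices:
tr(PQ) ≥ Σ_k λ_k(P) λ_{l−k+1}(Q). -/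
theorem stmt_6 {l : ℕ} (P Q : Matrix (Fin l) (Fin l) ℝ)
    (hP : P.PosSemidef) (hQ : Q.PosSemidef) :
    ∑ k : Fin l, eigsDesc hP.1 k * eigsDesc hQ.1 k.rev ≤ (P * Q).trace := by
  classical
  set d := hP.1.eigenvalues
  set e := hQ.1.eigenvalues
  set W : Matrix (Fin l) (Fin l) ℝ :=
    star (hP.1.eigenvectorUnitary : Matrix (Fin l) (Fin l) ℝ) *
      (hQ.1.eigenvectorUnitary : Matrix (Fin l) (Fin l) ℝ) with hWdef
  have hWu : W ∈ Matrix.unitaryGroup (Fin l) ℝ := by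
    rw [Matrix.mem_unitaryGroup_iff]
    have hU1 : star (hP.1.eigenvectorUnitary : Matrix (Fin l) (Fin l) ℝ) *
        (hP.1.eigenvectorUnitary : Matrix (Fin l) (Fin l) ℝ) = 1 :=
      Matrix.mem_unitaryGroup_iff'.mp hP.1.eigenvectorUnitary.2
    have hV1 : (hQ.1.eigenvectorUnitary : Matrix (Fin l) (Fin l) ℝ) *
        star (hQ.1.eigenvectorUnitary : Matrix (Fin l) (Fin l) ℝ) = 1 :=
      Matrix.mem_unitaryGroup_iff.mp hQ.1.eigenvectorUnitary.2
    rw [hWdef, Matrix.star_mul, star_star, Matrix.mul_assoc, ← Matrix.mul_assoc _ (star _) _,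
      hV1, Matrix.one_mul, hU1]
  set eP : Equiv.Perm (Fin l) := (Fin.revPerm).trans (Tuple.sort d) with hePdef
  set eQ : Equiv.Perm (Fin l) := (Fin.revPerm).trans (Tuple.sort e) with heQdef
  set C : Matrix (Fin l) (Fin l) ℝ := Matrix.of (fun k m => W (eP k) (eQ m) ^ 2) with hCdef
  have hC : C ∈ doublyStochastic ℝ (Fin l) := sq_entries_ds_aux hWu eP eQ
  have htrace : (P * Q).trace = ∑ k, ∑ m, eigsDesc hP.1 k * eigsDesc hQ.1 m * C k m := by
    rw [trace_mul_eq_sum_aux hP.1 hQ.1]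
    rw [← Equiv.sum_comp eP (fun i => ∑ j, d i * e j * W i j ^ 2)]
    refine Finset.sum_congr rfl fun k _ => ?_
    rw [← Equiv.sum_comp eQ (fun j => d (eP k) * e j * W (eP k) j ^ 2)]
    rfl
  rw [htrace]
  exact ds_rearrangement_aux _ _ (eigsDesc_antitone_aux hP.1) (eigsDesc_antitone_aux hQ.1) C hC
end

section
/- For the Brockett–Heisenberg system and any n-by-n target matrix H, the optimal single round cost minus the full-information cost satisfies Ĉ(H) − J(H) ≥ (2π/n) Σ_{k=1}^n (⌈k/2⌉ − 1) σ_k(H) ≥ 0, where Ĉ(H) = (2π/n) Σ_{k=1}^n ⌈k/2⌉ σ_k(H) and J(H) = (2π/n²) Σ_{i,j} |H_{ij}|. The difference is strictly positive if rank(H) > 2. -/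
open scoped BigOperators

lemma singVals_nonneg {n : ℕ} (H : Matrix (Fin n) (Fin n) ℝ) (k : Fin n) :
    0 ≤ singVals H k := Real.sqrt_nonneg _

lemma eigsDesc_nonneg {n : ℕ} (H : Matrix (Fin n) (Fin n) ℝ) (k : Fin n) :
    0 ≤ eigsDesc (Matrix.isHermitian_mul_conjTranspose_self H) k :=
  (Matrix.posSemidef_self_mul_conjTranspose H).eigenvalues_nonneg _

lemma sq_singVals {n : ℕ} (H : Matrix (Fin n) (Fin n) ℝ) (k : Fin n) :
    singVals H k ^ 2 = eigsDesc (Matrix.isHermitian_mul_conjTranspose_self H) k :=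
  Real.sq_sqrt (eigsDesc_nonneg H k)

lemma sum_sq_singVals {n : ℕ} (H : Matrix (Fin n) (Fin n) ℝ) :
    ∑ k, singVals H k ^ 2 = ∑ i, ∑ j, H i j ^ 2 := by
  simp only [sq_singVals]
  set hA := Matrix.isHermitian_mul_conjTranspose_self H
  have h1 : ∑ k, eigsDesc hA k = ∑ i, hA.eigenvalues i := by
    unfold eigsDesc
    exact Equiv.sum_comp ((Fin.revPerm).trans (Tuple.sort hA.eigenvalues)) hA.eigenvalues
  have h2 : (H * H.conjTranspose).trace = ∑ i, hA.eigenvalues i := by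
    conv_lhs => rw [hA.spectral_theorem]
    simp only [Unitary.conjStarAlgAut_apply, Unitary.coe_star]
    rw [Matrix.trace_mul_cycle,
      (Matrix.mem_unitaryGroup_iff').mp (hA.eigenvectorUnitary).2, one_mul,
      Matrix.trace_diagonal]
    simp
  rw [h1, ← h2]
  simp [Matrix.trace, Matrix.mul_apply, Matrix.diag, sq]

lemma l1_le_n_nuclear {n : ℕ} (H : Matrix (Fin n) (Fin n) ℝ) :
    ∑ i, ∑ j, |H i j| ≤ (n : ℝ) * ∑ k, singVals H k := by
  have habs : 0 ≤ ∑ i, ∑ j, |H i j| :=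
    Finset.sum_nonneg fun i _ => Finset.sum_nonneg fun j _ => abs_nonneg _
  have hs : 0 ≤ ∑ k, singVals H k := Finset.sum_nonneg fun k _ => singVals_nonneg H k
  have hn : (0:ℝ) ≤ n := Nat.cast_nonneg n
  rcases Nat.eq_zero_or_pos n with rfl | hn0
  · simp
  have key : (∑ i, ∑ j, |H i j|) ^ 2 ≤ ((n : ℝ) * ∑ k, singVals H k) ^ 2 := by
    have c1 : (∑ i, ∑ j, |H i j|) ^ 2 ≤ (n^2 : ℝ) * ∑ i, ∑ j, H i j ^ 2 := by
      have := sq_sum_le_card_mul_sum_sq (s := (Finset.univ : Finset (Fin n × Fin n)))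
        (f := fun p => |H p.1 p.2|)
      simp only [Finset.card_univ, Fintype.card_prod, Fintype.card_fin, sq_abs] at this
      calc (∑ i, ∑ j, |H i j|) ^ 2 = (∑ p : Fin n × Fin n, |H p.1 p.2|) ^ 2 := by
            rw [Fintype.sum_prod_type]
        _ ≤ ((n * n : ℕ) : ℝ) * ∑ p : Fin n × Fin n, H p.1 p.2 ^ 2 := by exact_mod_cast this
        _ = (n^2 : ℝ) * ∑ i, ∑ j, H i j ^ 2 := by
            rw [Fintype.sum_prod_type]; push_cast; ring
    have c2 : ∑ i, ∑ j, H i j ^ 2 ≤ (∑ k, singVals H k) ^ 2 := by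
      rw [← sum_sq_singVals]
      exact Finset.sum_sq_le_sq_sum_of_nonneg fun k _ => singVals_nonneg H k
    calc (∑ i, ∑ j, |H i j|) ^ 2 ≤ (n^2 : ℝ) * ∑ i, ∑ j, H i j ^ 2 := c1
      _ ≤ (n^2 : ℝ) * (∑ k, singVals H k) ^ 2 :=
          mul_le_mul_of_nonneg_left c2 (by positivity)
      _ = ((n : ℝ) * ∑ k, singVals H k) ^ 2 := by ring
  exact (pow_le_pow_iff_left₀ habs (by positivity) two_ne_zero).mp key

lemma rank_eq_aux {n : ℕ} (H : Matrix (Fin n) (Fin n) ℝ) :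
    H.rank = (H * H.conjTranspose).rank := by
  have : H.conjTranspose = H.transpose := by
    ext i j; simp [Matrix.conjTranspose_apply]
  rw [this, Matrix.rank_self_mul_transpose]

lemma singVals_pos {n : ℕ} (H : Matrix (Fin n) (Fin n) ℝ) (hr : 2 < H.rank)
    (k : Fin n) (hk : (k : ℕ) = 2) : 0 < singVals H k := by
  set hA := Matrix.isHermitian_mul_conjTranspose_self H with hhA
  set e : Fin n → ℝ := hA.eigenvalues ∘ Tuple.sort hA.eigenvalues with he
  have hmono : Monotone e := Tuple.monotone_sort hA.eigenvalues
  have hnn : ∀ i, 0 ≤ e i := fun i =>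
    (Matrix.posSemidef_self_mul_conjTranspose H).eigenvalues_nonneg _
  have hcard : 2 < Fintype.card {i // e i ≠ 0} := by
    have h1 : H.rank = Fintype.card {i // hA.eigenvalues i ≠ 0} := by
      rw [rank_eq_aux H, hA.rank_eq_card_non_zero_eigs]
    have h2 : Fintype.card {i // e i ≠ 0} = Fintype.card {i // hA.eigenvalues i ≠ 0} :=
      Fintype.card_congr ((Tuple.sort hA.eigenvalues).subtypeEquiv fun i => by simp [he])
    omega
  rw [show singVals H k = Real.sqrt (e k.rev) from rfl]
  apply Real.sqrt_pos.mpr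
  rcases lt_or_ge 0 (e k.rev) with h | h
  · exact h
  exfalso
  have hz : ∀ i : Fin n, i ≤ k.rev → e i = 0 := fun i hi =>
    le_antisymm ((hmono hi).trans h) (hnn i)
  have hsub : (Finset.univ.filter fun i => e i ≠ 0) ⊆ Finset.Ioi k.rev := by
    intro i hi
    simp only [Finset.mem_filter, Finset.mem_univ, true_and] at hi
    simp only [Finset.mem_Ioi]
    by_contra hle
    exact hi (hz i (le_of_not_gt hle))
  have hcard2 : Fintype.card {i // e i ≠ 0} ≤ (Finset.Ioi k.rev).card := by
    rw [Fintype.card_subtype]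
    exact Finset.card_le_card hsub
  rw [Fin.card_Ioi, Fin.val_rev] at hcard2
  have hn : 2 < n := by
    have := H.rank_le_card_width
    simp at this
    omega
  omega

/-- Cost gap between the optimal single round protocol and full information sharing for
the Brockett–Heisenberg system. -/
theorem stmt_15 {n : ℕ} (H : Matrix (Fin n) (Fin n) ℝ) :
    ((2 * Real.pi / n) * ∑ k : Fin n, ((⌈(((k : ℕ) + 1 : ℝ)) / 2⌉₊ : ℝ) - 1) * singVals H k)
      ≤ ((2 * Real.pi / n) * ∑ k : Fin n, (⌈(((k : ℕ) + 1 : ℝ)) / 2⌉₊ : ℝ) * singVals H k) -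
        ((2 * Real.pi / (n : ℝ) ^ 2) * ∑ i : Fin n, ∑ j : Fin n, |H i j|) ∧
    0 ≤ ((2 * Real.pi / n) *
        ∑ k : Fin n, ((⌈(((k : ℕ) + 1 : ℝ)) / 2⌉₊ : ℝ) - 1) * singVals H k) ∧
    (2 < H.rank →
      0 < ((2 * Real.pi / n) * ∑ k : Fin n, (⌈(((k : ℕ) + 1 : ℝ)) / 2⌉₊ : ℝ) * singVals H k) -
        ((2 * Real.pi / (n : ℝ) ^ 2) * ∑ i : Fin n, ∑ j : Fin n, |H i j|)) := by
  have hπ : 0 < Real.pi := Real.pi_pos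
  have hcoef : ∀ k : Fin n, (1 : ℝ) ≤ (⌈(((k : ℕ) + 1 : ℝ)) / 2⌉₊ : ℝ) := by
    intro k
    have : 1 ≤ ⌈(((k : ℕ) + 1 : ℝ)) / 2⌉₊ := Nat.one_le_ceil_iff.mpr (by positivity)
    exact_mod_cast this
  have hsum2 : 0 ≤ ∑ k : Fin n, ((⌈(((k : ℕ) + 1 : ℝ)) / 2⌉₊ : ℝ) - 1) * singVals H k :=
    Finset.sum_nonneg fun k _ =>
      mul_nonneg (by linarith [hcoef k]) (singVals_nonneg H k)
  have hsumdiff : ∑ k : Fin n, (⌈(((k : ℕ) + 1 : ℝ)) / 2⌉₊ : ℝ) * singVals H k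
      - ∑ k : Fin n, ((⌈(((k : ℕ) + 1 : ℝ)) / 2⌉₊ : ℝ) - 1) * singVals H k
      = ∑ k : Fin n, singVals H k := by
    rw [← Finset.sum_sub_distrib]
    congr 1; ext k; ring
  have part1 : ((2 * Real.pi / n) *
        ∑ k : Fin n, ((⌈(((k : ℕ) + 1 : ℝ)) / 2⌉₊ : ℝ) - 1) * singVals H k)
      ≤ ((2 * Real.pi / n) * ∑ k : Fin n, (⌈(((k : ℕ) + 1 : ℝ)) / 2⌉₊ : ℝ) * singVals H k) -
        ((2 * Real.pi / (n : ℝ) ^ 2) * ∑ i : Fin n, ∑ j : Fin n, |H i j|) := by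
    rcases Nat.eq_zero_or_pos n with rfl | hn0
    · simp
    have hnR : (0:ℝ) < n := by exact_mod_cast hn0
    have hJ : (2 * Real.pi / (n : ℝ) ^ 2) * ∑ i : Fin n, ∑ j : Fin n, |H i j|
        ≤ (2 * Real.pi / n) * ∑ k : Fin n, singVals H k := by
      have h1 := l1_le_n_nuclear H
      have h2 : (2 * Real.pi / (n : ℝ) ^ 2) * ∑ i : Fin n, ∑ j : Fin n, |H i j|
          ≤ (2 * Real.pi / (n : ℝ) ^ 2) * ((n : ℝ) * ∑ k : Fin n, singVals H k) :=
        mul_le_mul_of_nonneg_left h1 (by positivity)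
      have h3 : (2 * Real.pi / (n : ℝ) ^ 2) * ((n : ℝ) * ∑ k : Fin n, singVals H k)
          = (2 * Real.pi / n) * ∑ k : Fin n, singVals H k := by
        field_simp
      linarith
    have expand : (2 * Real.pi / n) * ∑ k : Fin n, singVals H k
        = ((2 * Real.pi / n) * ∑ k : Fin n, (⌈(((k : ℕ) + 1 : ℝ)) / 2⌉₊ : ℝ) * singVals H k)
          - ((2 * Real.pi / n) *
            ∑ k : Fin n, ((⌈(((k : ℕ) + 1 : ℝ)) / 2⌉₊ : ℝ) - 1) * singVals H k) := by
      rw [← mul_sub, hsumdiff]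
    linarith
  refine ⟨part1, ?_, ?_⟩
  · rcases Nat.eq_zero_or_pos n with rfl | hn0
    · simp
    have hnR : (0:ℝ) < n := by exact_mod_cast hn0
    positivity
  · intro hr
    have hn : 2 < n := by
      have := H.rank_le_card_width
      simp at this
      omega
    have hnR : (0:ℝ) < n := by positivity
    set k2 : Fin n := ⟨2, hn⟩ with hk2
    have hσ : 0 < singVals H k2 := singVals_pos H hr k2 rfl
    have hterm : (0:ℝ) < ((⌈(((k2 : ℕ) + 1 : ℝ)) / 2⌉₊ : ℝ) - 1) * singVals H k2 := by
      have : (⌈(((k2 : ℕ) + 1 : ℝ)) / 2⌉₊ : ℕ) = 2 := by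
        rw [hk2]
        norm_num
      rw [this]
      norm_num [hσ]
    have hpos : 0 < ∑ k : Fin n, ((⌈(((k : ℕ) + 1 : ℝ)) / 2⌉₊ : ℝ) - 1) * singVals H k := by
      apply Finset.sum_pos' (fun k _ =>
        mul_nonneg (by linarith [hcoef k]) (singVals_nonneg H k))
      exact ⟨k2, Finset.mem_univ _, hterm⟩
    have : 0 < (2 * Real.pi / n) *
        ∑ k : Fin n, ((⌈(((k : ℕ) + 1 : ℝ)) / 2⌉₊ : ℝ) - 1) * singVals H k := by
      apply mul_pos (by positivity) hpos
    linarith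
end

section
/- Let F be a bounded bilinear map with regular matrix representation F and largest singular value σ₁(F), and let {H₁,…,H_K} be a sub-matrix partition of the m-by-n matrix H into m_k-by-n_k blocks. Then (1/(mn)) Σ_{k=1}^K m_k n_k · (2/√(m_k n_k)) Σ_{l=1}^{min(m_k,n_k)} σ_l(H_k)/σ_l(F) ≥ (2/(mn σ₁(F))) Σ_{i,j} |H_{ij}|, with equality when every block H_k is monochromatic. -/
open scoped BigOperators

lemma eigsDesc_antitone {p : ℕ} {A : Matrix (Fin p) (Fin p) ℝ} (hA : A.IsHermitian) :
    Antitone (eigsDesc hA) := by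
  intro i j hij
  exact Tuple.monotone_sort hA.eigenvalues (Fin.rev_le_rev.mpr hij)

lemma sum_eigsDesc {p : ℕ} {A : Matrix (Fin p) (Fin p) ℝ} (hA : A.IsHermitian) :
    ∑ i, eigsDesc hA i = ∑ i, hA.eigenvalues i := by
  have := Equiv.sum_comp ((Fin.revPerm).trans (Tuple.sort hA.eigenvalues)) hA.eigenvalues
  simpa [eigsDesc, Function.comp] using this

lemma sum_eigenvalues_eq_trace {p : ℕ} {A : Matrix (Fin p) (Fin p) ℝ} (hA : A.IsHermitian) :
    ∑ i, hA.eigenvalues i = A.trace := by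
  conv_rhs => rw [hA.spectral_theorem, Unitary.conjStarAlgAut_apply]
  rw [Matrix.trace_mul_cycle]
  have h1 : (star (hA.eigenvectorUnitary : Matrix (Fin p) (Fin p) ℝ)) *
      (hA.eigenvectorUnitary : Matrix (Fin p) (Fin p) ℝ) = 1 :=
    Unitary.coe_star_mul_self hA.eigenvectorUnitary
  rw [h1, Matrix.one_mul, Matrix.trace_diagonal]
  simp

open Matrix in
lemma trace_mul_conjTranspose_self {p q : ℕ} (M : Matrix (Fin p) (Fin q) ℝ) :
    (M * Mᴴ).trace = ∑ i, ∑ j, (M i j)^2 := by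
  simp [Matrix.trace, Matrix.diag, Matrix.mul_apply, Matrix.conjTranspose_apply, sq]

lemma eigsDesc_eq_zero_of_rank_le {p : ℕ} {A : Matrix (Fin p) (Fin p) ℝ} (hA : A.IsHermitian)
    (hpos : ∀ i, 0 ≤ hA.eigenvalues i) {r : ℕ} (hr : A.rank ≤ r) (i : Fin p)
    (hi : r ≤ (i : ℕ)) : eigsDesc hA i = 0 := by
  classical
  by_contra hne
  set e : Equiv.Perm (Fin p) := (Fin.revPerm).trans (Tuple.sort hA.eigenvalues) with he
  have hpos' : ∀ j : Fin p, j ≤ i → hA.eigenvalues (e j) ≠ 0 := by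
    intro j hj
    have hmono : hA.eigenvalues (e i) ≤ hA.eigenvalues (e j) :=
      Tuple.monotone_sort hA.eigenvalues (Fin.rev_le_rev.mpr hj)
    have h0 : 0 < hA.eigenvalues (e i) :=
      lt_of_le_of_ne (hpos _) (Ne.symm (by simpa [he, eigsDesc] using hne))
    exact ne_of_gt (lt_of_lt_of_le h0 hmono)
  have hcard : A.rank = Fintype.card {j // hA.eigenvalues j ≠ 0} :=
    hA.rank_eq_card_non_zero_eigs
  have hcard' : Fintype.card {j // hA.eigenvalues j ≠ 0} =
      (Finset.univ.filter (fun j => hA.eigenvalues j ≠ 0)).card := by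
    simp [Fintype.card_subtype]
  have hinj : Set.InjOn (fun j => e j) (Finset.Iic i) := fun a _ b _ hab => e.injective hab
  have hsub : ∀ j ∈ Finset.Iic i, e j ∈ Finset.univ.filter (fun j => hA.eigenvalues j ≠ 0) := by
    intro j hj
    simp only [Finset.mem_filter, Finset.mem_univ, true_and]
    exact hpos' j (Finset.mem_Iic.mp hj)
  have hle : (Finset.Iic i).card ≤
      (Finset.univ.filter (fun j => hA.eigenvalues j ≠ 0)).card :=
    Finset.card_le_card_of_injOn _ hsub hinj
  have hIic : (Finset.Iic i).card = (i : ℕ) + 1 := by simp [Fin.card_Iic]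
  omega

open Matrix in
lemma eigsDescM_nonneg {p q : ℕ} (M : Matrix (Fin p) (Fin q) ℝ) (i : Fin p) :
    0 ≤ eigsDesc (Matrix.isHermitian_mul_conjTranspose_self M) i :=
  (Matrix.posSemidef_self_mul_conjTranspose M).eigenvalues_nonneg _

open Matrix in
lemma eigsDescM_eq_zero {p q : ℕ} (M : Matrix (Fin p) (Fin q) ℝ) (i : Fin p)
    (hi : min p q ≤ (i : ℕ)) :
    eigsDesc (Matrix.isHermitian_mul_conjTranspose_self M) i = 0 := by
  apply eigsDesc_eq_zero_of_rank_le _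
    (fun j => (Matrix.posSemidef_self_mul_conjTranspose M).eigenvalues_nonneg j) _ i hi
  rw [Matrix.rank_self_mul_conjTranspose]
  exact le_min ((Matrix.rank_le_card_height M).trans (by simp))
    ((Matrix.rank_le_card_width M).trans (by simp))

open Matrix in
lemma sum_singVals_sq {p q : ℕ} (M : Matrix (Fin p) (Fin q) ℝ) :
    ∑ a ∈ Finset.univ.filter (fun a : Fin p => (a : ℕ) < min p q), (singVals M a)^2
      = ∑ i, ∑ j, (M i j)^2 := by
  classical
  have hzero : ∀ a : Fin p, ¬ ((a : ℕ) < min p q) → (singVals M a)^2 = 0 := by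
    intro a ha
    rw [singVals, eigsDescM_eq_zero M a (not_lt.mp ha)]; simp
  rw [Finset.sum_subset (Finset.filter_subset _ Finset.univ)
    (fun x _ hx' => hzero x (by simpa using hx'))]
  have h2 : ∀ a : Fin p, (singVals M a)^2
      = eigsDesc (Matrix.isHermitian_mul_conjTranspose_self M) a := fun a =>
    Real.sq_sqrt (eigsDescM_nonneg M a)
  simp_rw [h2]
  rw [sum_eigsDesc, sum_eigenvalues_eq_trace, trace_mul_conjTranspose_self]

open Finset in
lemma abs_sum_sq_le {p q : ℕ} (M : Matrix (Fin p) (Fin q) ℝ) :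
    (∑ i, ∑ j, |M i j|)^2 ≤ ((p : ℝ) * q) * ∑ i, ∑ j, (M i j)^2 := by
  have h := sq_sum_le_card_mul_sum_sq (s := (Finset.univ : Finset (Fin p × Fin q)))
    (f := fun x => |M x.1 x.2|)
  simp only [Finset.card_univ, Fintype.card_prod, Fintype.card_fin] at h
  calc (∑ i, ∑ j, |M i j|)^2 = (∑ x : Fin p × Fin q, |M x.1 x.2|)^2 := by
        rw [Fintype.sum_prod_type]
    _ ≤ ((p*q : ℕ) : ℝ) * ∑ x : Fin p × Fin q, |M x.1 x.2|^2 := by exact_mod_cast h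
    _ = ((p : ℝ) * q) * ∑ i, ∑ j, (M i j)^2 := by
        rw [Fintype.sum_prod_type]; push_cast; simp [sq_abs]

lemma block_ineq {p q : ℕ} (M : Matrix (Fin p) (Fin q) ℝ) (σF : ℕ → ℝ)
    (hσFpos : ∀ i, 0 < σF i) (hσFdec : ∀ i j : ℕ, i ≤ j → σF j ≤ σF i) :
    (1 / σF 0) * ∑ i, ∑ j, |M i j| ≤
      Real.sqrt ((p : ℝ) * q) *
        ∑ a ∈ Finset.univ.filter (fun a : Fin p => (a : ℕ) < min p q),
          singVals M a / σF (a : ℕ) := by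
  classical
  set F := Finset.univ.filter (fun a : Fin p => (a : ℕ) < min p q) with hF
  set T := ∑ a ∈ F, singVals M a with hT
  have hσnn : ∀ a : Fin p, 0 ≤ singVals M a := fun a => Real.sqrt_nonneg _
  have hTnn : 0 ≤ T := Finset.sum_nonneg (fun a _ => hσnn a)
  have hsq : ∑ a ∈ F, (singVals M a)^2 = ∑ i, ∑ j, (M i j)^2 := sum_singVals_sq M
  have hTsq : ∑ i, ∑ j, (M i j)^2 ≤ T^2 := by
    rw [← hsq]
    exact Finset.sum_sq_le_sq_sum_of_nonneg (fun a _ => hσnn a)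
  have habs : ∑ i, ∑ j, |M i j| ≤ Real.sqrt ((p : ℝ) * q) * T := by
    have h1 : (∑ i, ∑ j, |M i j|)^2 ≤ ((p : ℝ) * q) * T^2 :=
      (abs_sum_sq_le M).trans (by
        have : (0:ℝ) ≤ (p : ℝ) * q := by positivity
        nlinarith)
    have h2 : (0:ℝ) ≤ ∑ i, ∑ j, |M i j| :=
      Finset.sum_nonneg fun i _ => Finset.sum_nonneg fun j _ => abs_nonneg _
    calc ∑ i, ∑ j, |M i j| = Real.sqrt ((∑ i, ∑ j, |M i j|)^2) := (Real.sqrt_sq h2).symm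
      _ ≤ Real.sqrt (((p : ℝ) * q) * T^2) := Real.sqrt_le_sqrt h1
      _ = Real.sqrt ((p : ℝ) * q) * T := by
          rw [Real.sqrt_mul (by positivity), Real.sqrt_sq hTnn]
  have hS : T / σF 0 ≤ ∑ a ∈ F, singVals M a / σF (a : ℕ) := by
    rw [hT, Finset.sum_div]
    refine Finset.sum_le_sum (fun a _ => ?_)
    have h1 : 0 < σF (a : ℕ) := hσFpos _
    have h2 : σF (a : ℕ) ≤ σF 0 := hσFdec 0 _ (Nat.zero_le _)
    exact div_le_div_of_nonneg_left (hσnn a) h1 h2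
  have hσ0 : 0 < σF 0 := hσFpos 0
  calc (1 / σF 0) * ∑ i, ∑ j, |M i j| ≤ (1 / σF 0) * (Real.sqrt ((p : ℝ) * q) * T) := by
        apply mul_le_mul_of_nonneg_left habs (by positivity)
    _ = Real.sqrt ((p : ℝ) * q) * (T / σF 0) := by ring
    _ ≤ _ := mul_le_mul_of_nonneg_left hS (Real.sqrt_nonneg _)

open Matrix in
lemma block_eq {p q : ℕ} (M : Matrix (Fin p) (Fin q) ℝ) (σF : ℕ → ℝ)
    (hσFpos : ∀ i, 0 < σF i)
    (hc : ∀ (a a' : Fin p) (b b' : Fin q), M a b = M a' b') :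
    (1 / σF 0) * ∑ i, ∑ j, |M i j| =
      Real.sqrt ((p : ℝ) * q) *
        ∑ a ∈ Finset.univ.filter (fun a : Fin p => (a : ℕ) < min p q),
          singVals M a / σF (a : ℕ) := by
  classical
  rcases Nat.eq_zero_or_pos p with hp | hp
  · subst hp; simp
  rcases Nat.eq_zero_or_pos q with hq | hq
  · subst hq; simp
  set i0 : Fin p := ⟨0, hp⟩
  set j0 : Fin q := ⟨0, hq⟩
  set c : ℝ := M i0 j0 with hcdef
  have hcc : ∀ a b, M a b = c := fun a b => hc a i0 b j0
  have hLHS : ∑ i, ∑ j, |M i j| = (p : ℝ) * q * |c| := by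
    simp [hcc, Finset.sum_const, mul_comm, mul_assoc]
  have hMfac : M = (Matrix.of fun _ (_ : Fin 1) => c) * (Matrix.of fun (_ : Fin 1) _ => (1:ℝ)) := by
    ext i j; simp [Matrix.mul_apply, hcc]
  have hrank : M.rank ≤ 1 := by
    rw [hMfac]
    exact (Matrix.rank_mul_le_left _ _).trans ((Matrix.rank_le_card_width _).trans (by simp))
  have hrank' : (M * Mᴴ).rank ≤ 1 := by
    rw [Matrix.rank_self_mul_conjTranspose]; exact hrank
  have hz : ∀ a : Fin p, 1 ≤ (a : ℕ) →
      eigsDesc (Matrix.isHermitian_mul_conjTranspose_self M) a = 0 := fun a ha =>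
    eigsDesc_eq_zero_of_rank_le _
      (fun j => (Matrix.posSemidef_self_mul_conjTranspose M).eigenvalues_nonneg j) hrank' a ha
  have hzsv : ∀ a : Fin p, 1 ≤ (a : ℕ) → singVals M a = 0 := by
    intro a ha; rw [singVals, hz a ha]; simp
  have hsum0 : eigsDesc (Matrix.isHermitian_mul_conjTranspose_self M) i0
      = (p : ℝ) * q * c^2 := by
    have h1 : ∑ a : Fin p, eigsDesc (Matrix.isHermitian_mul_conjTranspose_self M) a
        = eigsDesc (Matrix.isHermitian_mul_conjTranspose_self M) i0 :=
      Finset.sum_eq_single i0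
        (fun b _ hb => hz b (by
          rcases Nat.eq_zero_or_pos (b : ℕ) with h | h
          · exact absurd (Fin.ext h) hb
          · exact h))
        (fun h => absurd (Finset.mem_univ i0) h)
    rw [← h1, sum_eigsDesc, sum_eigenvalues_eq_trace, trace_mul_conjTranspose_self]
    simp [hcc, Finset.sum_const, mul_comm, mul_assoc]
  have hσ0 : singVals M i0 = Real.sqrt ((p : ℝ) * q) * |c| := by
    rw [singVals, hsum0, Real.sqrt_mul (by positivity), Real.sqrt_sq_eq_abs]
  have hmem : i0 ∈ Finset.univ.filter (fun a : Fin p => (a : ℕ) < min p q) := by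
    simp only [Finset.mem_filter, Finset.mem_univ, true_and]
    exact lt_min hp hq
  have hRHSsum : ∑ a ∈ Finset.univ.filter (fun a : Fin p => (a : ℕ) < min p q),
      singVals M a / σF (a : ℕ) = singVals M i0 / σF 0 := by
    refine Finset.sum_eq_single i0
      (fun b _ hb => ?_) (fun h => absurd hmem h)
    rw [hzsv b (by
      rcases Nat.eq_zero_or_pos (b : ℕ) with h | h
      · exact absurd (Fin.ext h) hb
      · exact h)]
    simp
  rw [hRHSsum, hσ0, hLHS]
  have hss : Real.sqrt ((p:ℝ)*q) * Real.sqrt ((p:ℝ)*q) = (p:ℝ)*q :=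
    Real.mul_self_sqrt (by positivity)
  have hσ : σF 0 ≠ 0 := ne_of_gt (hσFpos 0)
  linear_combination (-|c| / σF 0) * hss

lemma sqrt_helper (r X : ℝ) (hr : 0 ≤ r) :
    r * (2 / Real.sqrt r * X) = 2 * (Real.sqrt r * X) := by
  rcases eq_or_lt_of_le hr with h | h
  · simp [← h]
  · have h2 : Real.sqrt r ≠ 0 := by positivity
    have hss : Real.sqrt r * Real.sqrt r = r := Real.mul_self_sqrt hr
    field_simp
    linear_combination (-X) * hss

set_option maxHeartbeats 1000000 in
/-- Lower bound for the averaged control cost of single round protocols applied to the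
blocks of a sub-matrix partition, with equality for monochromatic partitions.
σF enumerates (1-indexed via σF 0 = σ₁(F)) the decreasing positive singular values of the
regular representation F. -/
theorem stmt_17 {m n K : ℕ} (hm : 0 < m) (hn : 0 < n)
    (H : Matrix (Fin m) (Fin n) ℝ)
    (mk nk : Fin K → ℕ)
    (t : (k : Fin K) → Fin (mk k) → Fin m) (s : (k : Fin K) → Fin (nk k) → Fin n)
    (ht : ∀ k, Function.Injective (t k)) (hs : ∀ k, Function.Injective (s k))
    (hpart : ∀ (i : Fin m) (j : Fin n),
      ∃! x : Σ k : Fin K, Fin (mk k) × Fin (nk k), t x.1 x.2.1 = i ∧ s x.1 x.2.2 = j)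
    (σF : ℕ → ℝ) (hσFpos : ∀ i, 0 < σF i) (hσFdec : ∀ i j : ℕ, i ≤ j → σF j ≤ σF i) :
    (2 / ((m * n : ℝ) * σF 0)) * ∑ i : Fin m, ∑ j : Fin n, |H i j| ≤
      (1 / (m * n : ℝ)) * ∑ k : Fin K, (mk k * nk k : ℝ) *
        ((2 / Real.sqrt (mk k * nk k)) *
          ∑ a ∈ Finset.univ.filter (fun a : Fin (mk k) => (a : ℕ) < min (mk k) (nk k)),
            singVals (fun i j => H (t k i) (s k j) : Matrix (Fin (mk k)) (Fin (nk k)) ℝ) a /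
              σF (a : ℕ)) ∧
    ((∀ (k : Fin K) (a a' : Fin (mk k)) (b b' : Fin (nk k)),
        H (t k a) (s k b) = H (t k a') (s k b')) →
      (2 / ((m * n : ℝ) * σF 0)) * ∑ i : Fin m, ∑ j : Fin n, |H i j| =
        (1 / (m * n : ℝ)) * ∑ k : Fin K, (mk k * nk k : ℝ) *
          ((2 / Real.sqrt (mk k * nk k)) *
            ∑ a ∈ Finset.univ.filter (fun a : Fin (mk k) => (a : ℕ) < min (mk k) (nk k)),
              singVals (fun i j => H (t k i) (s k j) : Matrix (Fin (mk k)) (Fin (nk k)) ℝ) a /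
                σF (a : ℕ))) := by
  classical
  -- partition bijection
  set f : (Σ k : Fin K, Fin (mk k) × Fin (nk k)) → Fin m × Fin n :=
    fun x => (t x.1 x.2.1, s x.1 x.2.2) with hf
  have hbij : Function.Bijective f := by
    rw [Function.bijective_iff_existsUnique]
    intro y
    obtain ⟨x, hx, hx'⟩ := hpart y.1 y.2
    refine ⟨x, ?_, fun z hz => hx' z ?_⟩
    · simp [hf, Prod.ext_iff]; exact hx
    · constructor
      · exact congrArg Prod.fst hz
      · exact congrArg Prod.snd hz
  have hsplit : ∑ i : Fin m, ∑ j : Fin n, |H i j|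
      = ∑ k : Fin K, ∑ a : Fin (mk k), ∑ b : Fin (nk k), |H (t k a) (s k b)| := by
    calc ∑ i : Fin m, ∑ j : Fin n, |H i j|
        = ∑ y : Fin m × Fin n, |H y.1 y.2| :=
          (Fintype.sum_prod_type (f := fun y : Fin m × Fin n => |H y.1 y.2|)).symm
      _ = ∑ x : (Σ k : Fin K, Fin (mk k) × Fin (nk k)), |H (f x).1 (f x).2| :=
          (Fintype.sum_bijective f hbij _ _ (fun x => rfl)).symm
      _ = ∑ k : Fin K, ∑ pr : Fin (mk k) × Fin (nk k), |H (t k pr.1) (s k pr.2)| := by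
          rw [← Finset.univ_sigma_univ, Finset.sum_sigma]
      _ = ∑ k : Fin K, ∑ a : Fin (mk k), ∑ b : Fin (nk k), |H (t k a) (s k b)| :=
          Finset.sum_congr rfl fun k _ =>
            Fintype.sum_prod_type (f := fun pr : Fin (mk k) × Fin (nk k) => |H (t k pr.1) (s k pr.2)|)
  have hmn : (0:ℝ) < (m:ℝ) * n := by positivity
  -- rewrite the RHS block terms
  have hterm : ∀ k : Fin K, ((mk k : ℝ) * (nk k : ℝ)) *
      ((2 / Real.sqrt ((mk k : ℝ) * (nk k : ℝ))) *
        ∑ a ∈ Finset.univ.filter (fun a : Fin (mk k) => (a : ℕ) < min (mk k) (nk k)),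
          singVals (fun i j => H (t k i) (s k j) : Matrix (Fin (mk k)) (Fin (nk k)) ℝ) a /
            σF (a : ℕ))
      = 2 * (Real.sqrt ((mk k : ℝ) * (nk k : ℝ)) *
        ∑ a ∈ Finset.univ.filter (fun a : Fin (mk k) => (a : ℕ) < min (mk k) (nk k)),
          singVals (fun i j => H (t k i) (s k j) : Matrix (Fin (mk k)) (Fin (nk k)) ℝ) a /
            σF (a : ℕ)) := fun k => sqrt_helper _ _ (by positivity)
  constructor
  · rw [hsplit, Finset.mul_sum, Finset.mul_sum]
    refine Finset.sum_le_sum fun k _ => ?_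
    have hb := block_ineq (fun i j => H (t k i) (s k j) : Matrix (Fin (mk k)) (Fin (nk k)) ℝ)
      σF hσFpos hσFdec
    rw [hterm k]
    have h1 : 2 / ((m * n : ℝ) * σF 0) * ∑ a : Fin (mk k), ∑ b : Fin (nk k), |H (t k a) (s k b)|
        = (2 / ((m:ℝ) * n)) * ((1 / σF 0) * ∑ a : Fin (mk k), ∑ b : Fin (nk k),
          |H (t k a) (s k b)|) := by
      field_simp
    rw [h1]
    have h2 : (2 / ((m:ℝ) * n)) * ((1 / σF 0) * ∑ a : Fin (mk k), ∑ b : Fin (nk k),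
        |H (t k a) (s k b)|) ≤ (2 / ((m:ℝ) * n)) * (Real.sqrt ((mk k : ℝ) * (nk k : ℝ)) *
        ∑ a ∈ Finset.univ.filter (fun a : Fin (mk k) => (a : ℕ) < min (mk k) (nk k)),
          singVals (fun i j => H (t k i) (s k j) : Matrix (Fin (mk k)) (Fin (nk k)) ℝ) a /
            σF (a : ℕ)) :=
      mul_le_mul_of_nonneg_left hb (by positivity)
    refine h2.trans (le_of_eq ?_)
    ring
  · intro hmono
    rw [hsplit, Finset.mul_sum, Finset.mul_sum]
    refine Finset.sum_congr rfl fun k _ => ?_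
    have hb := block_eq (fun i j => H (t k i) (s k j) : Matrix (Fin (mk k)) (Fin (nk k)) ℝ)
      σF hσFpos (hmono k)
    rw [hterm k]
    rw [show 2 / ((m * n : ℝ) * σF 0) * ∑ a : Fin (mk k), ∑ b : Fin (nk k), |H (t k a) (s k b)|
        = (2 / ((m:ℝ) * n)) * ((1 / σF 0) * ∑ a : Fin (mk k), ∑ b : Fin (nk k),
          |H (t k a) (s k b)|) by field_simp]
    rw [hb]
    ring
end
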